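/- Every ε-free linear context-free language is recognised by an L(/→, \→)-grammar with types of degree at most 1, via the assignment A/B ∈ f(a) iff A → aB ∈ P, B\A ∈ f(a) iff A → Ba ∈ P, and A ∈ f(a) iff A → a ∈ P. -/

import Mathlib

/-- Types over primitives `P` with `/` and `\`. `div β α` is `β/α`; `bsl α β` is `α\β`. -/
inductive Tp2 (P : Type) : Type
  | pr : P → Tp2 P
  | div : Tp2 P → Tp2 P → Tp2 P
  | bsl : Tp2 P → Tp2 P → Tp2 P

open Tp2

/-- The calculus L(/→, \→) with Cut. -/
inductive Der2 {P : Type} : List (Tp2 P) → Tp2 P → Prop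
  | ax (α : Tp2 P) : Der2 [α] α
  | slash {Γ Δ Θ : List (Tp2 P)} {α β γ : Tp2 P} :
      Der2 Γ α → Der2 (Δ ++ β :: Θ) γ → Der2 (Δ ++ div β α :: (Γ ++ Θ)) γ
  | bslash {Γ Δ Θ : List (Tp2 P)} {α β γ : Tp2 P} :
      Der2 Γ α → Der2 (Δ ++ β :: Θ) γ → Der2 (Δ ++ (Γ ++ bsl α β :: Θ)) γ
  | cut {Γ Θ Δ : List (Tp2 P)} {α β : Tp2 P} :
      Der2 (Γ ++ α :: Θ) β → Der2 Δ α → Der2 (Γ ++ (Δ ++ Θ)) β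

/-- Cut-free L(/→, \→). -/
inductive DerCF2 {P : Type} : List (Tp2 P) → Tp2 P → Prop
  | ax (α : Tp2 P) : DerCF2 [α] α
  | slash {Γ Δ Θ : List (Tp2 P)} {α β γ : Tp2 P} :
      DerCF2 Γ α → DerCF2 (Δ ++ β :: Θ) γ → DerCF2 (Δ ++ div β α :: (Γ ++ Θ)) γ
  | bslash {Γ Δ Θ : List (Tp2 P)} {α β γ : Tp2 P} :
      DerCF2 Γ α → DerCF2 (Δ ++ β :: Θ) γ → DerCF2 (Δ ++ (Γ ++ bsl α β :: Θ)) γ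

/-- Degree: number of occurrences of connectives. -/
def deg2 {P : Type} : Tp2 P → ℕ
  | pr _ => 0
  | div a b => deg2 a + deg2 b + 1
  | bsl a b => deg2 a + deg2 b + 1

/-- A Lambek grammar over types with `/` and `\`. -/
structure LGrammar2 (P V : Type) where
  S : P
  f : V → Set (Tp2 P)
  fin : ∀ a : V, (f a).Finite

/-- The language recognised by an L(/→, \→)-grammar. -/
def LGrammar2.Lang {P V : Type} (G : LGrammar2 P V) : Set (List V) :=
  {w | ∃ Γ : List (Tp2 P), List.Forall₂ (fun a α => α ∈ G.f a) w Γ ∧ Der2 Γ (pr G.S)}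

/-- A linear context-free grammar: productions `A → aB`, `A → Ba`, `A → a`. -/
structure LinGrammar (N T : Type) where
  S : N
  rule_r : N → T → N → Prop
  rule_l : N → N → T → Prop
  term : N → T → Prop

/-- Generation relation of a linear context-free grammar. -/
inductive LinGen {N T : Type} (G : LinGrammar N T) : N → List T → Prop
  | term {A : N} {a : T} : G.term A a → LinGen G A [a]
  | right {A B : N} {a : T} {w : List T} : G.rule_r A a B → LinGen G B w → LinGen G A (a :: w)
  | left {A B : N} {a : T} {w : List T} : G.rule_l A B a → LinGen G B w → LinGen G A (w ++ [a])

/-- The language generated by a linear context-free grammar. -/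
def LinGrammar.Lang {N T : Type} (G : LinGrammar N T) : Set (List T) :=
  {w | LinGen G G.S w}

/-- Language interpretation of types, relative to a linear grammar. -/
def interpTp {N T : Type} (G : LinGrammar N T) : Tp2 N → Set (List T)
  | pr A => {w | LinGen G A w}
  | div b a => {w | ∀ v ∈ interpTp G a, w ++ v ∈ interpTp G b}
  | bsl a b => {w | ∀ v ∈ interpTp G a, v ++ w ∈ interpTp G b}

lemma forall₂_append_split {α β : Type*} {R : α → β → Prop} :
    ∀ {l₁ l₂ : List α} {l : List β}, List.Forall₂ R (l₁ ++ l₂) l →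
      ∃ m₁ m₂, l = m₁ ++ m₂ ∧ List.Forall₂ R l₁ m₁ ∧ List.Forall₂ R l₂ m₂ := by
  intro l₁
  induction l₁ with
  | nil => intro l₂ l h; exact ⟨[], l, rfl, List.Forall₂.nil, h⟩
  | cons a l₁ ih =>
    intro l₂ l h
    cases h with
    | cons hr h =>
      obtain ⟨m₁, m₂, rfl, h₁, h₂⟩ := ih h
      exact ⟨_ :: m₁, m₂, rfl, List.Forall₂.cons hr h₁, h₂⟩

/-- Soundness of `Der2` for the language interpretation. -/
lemma der2_sound {N T : Type} (G : LinGrammar N T) {Γ : List (Tp2 N)} {γ : Tp2 N}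
    (h : Der2 Γ γ) :
    ∀ ws : List (List T), List.Forall₂ (fun α u => u ∈ interpTp G α) Γ ws →
      ws.flatten ∈ interpTp G γ := by
  induction h with
  | ax α =>
    intro ws h
    cases h with
    | cons hr h => cases h; simpa using hr
  | @slash Γ Δ Θ α β γ h1 h2 ih1 ih2 =>
    intro ws h
    obtain ⟨mΔ, m', rfl, hΔ, h'⟩ := forall₂_append_split h
    cases h' with
    | @cons _ x _ ms hx h' =>
      obtain ⟨mΓ, mΘ, rfl, hΓ, hΘ⟩ := forall₂_append_split h'
      have hg : mΓ.flatten ∈ interpTp G α := ih1 mΓ hΓ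
      have hb : x ++ mΓ.flatten ∈ interpTp G β := hx _ hg
      have := ih2 (mΔ ++ (x ++ mΓ.flatten) :: mΘ)
        (List.rel_append hΔ (List.Forall₂.cons hb hΘ))
      simpa [List.flatten_append, List.append_assoc] using this
  | @bslash Γ Δ Θ α β γ h1 h2 ih1 ih2 =>
    intro ws h
    obtain ⟨mΔ, m', rfl, hΔ, h'⟩ := forall₂_append_split h
    obtain ⟨mΓ, m'', rfl, hΓ, h''⟩ := forall₂_append_split h'
    cases h'' with
    | @cons _ x _ ms hx hΘ =>
      have hg : mΓ.flatten ∈ interpTp G α := ih1 mΓ hΓ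
      have hb : mΓ.flatten ++ x ∈ interpTp G β := hx _ hg
      have := ih2 (mΔ ++ (mΓ.flatten ++ x) :: ms)
        (List.rel_append hΔ (List.Forall₂.cons hb hΘ))
      simpa [List.flatten_append, List.append_assoc] using this
  | @cut Γ Θ Δ α β h1 h2 ih1 ih2 =>
    intro ws h
    obtain ⟨mΓ, m', rfl, hΓ, h'⟩ := forall₂_append_split h
    obtain ⟨mΔ, mΘ, rfl, hΔ, hΘ⟩ := forall₂_append_split h'
    have ha : mΔ.flatten ∈ interpTp G α := ih2 mΔ hΔ
    have := ih1 (mΓ ++ mΔ.flatten :: mΘ)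
      (List.rel_append hΓ (List.Forall₂.cons ha hΘ))
    simpa [List.flatten_append, List.append_assoc] using this

theorem linear_to_lambek {N T : Type} [Finite N] [Finite T] (G : LinGrammar N T)
    (LG : LGrammar2 N T) (hS : LG.S = G.S)
    (hf : ∀ a : T, LG.f a =
      {α | (∃ A B : N, G.rule_r A a B ∧ α = div (pr A) (pr B)) ∨
           (∃ A B : N, G.rule_l A B a ∧ α = bsl (pr B) (pr A)) ∨
           (∃ A : N, G.term A a ∧ α = pr A)}) :
    LG.Lang = G.Lang := by
  ext w
  constructor
  · rintro ⟨Γ, hΓ, hd⟩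
    -- build ws = map singleton w
    have key : ∀ {w : List T} {Γ : List (Tp2 N)},
        List.Forall₂ (fun a α => α ∈ LG.f a) w Γ →
        List.Forall₂ (fun α u => u ∈ interpTp G α) Γ (w.map fun a => [a]) := by
      intro w Γ h
      induction h with
      | nil => exact List.Forall₂.nil
      | @cons a α w Γ ha _ ih =>
        refine List.Forall₂.cons ?_ ih
        rw [hf a] at ha
        rcases ha with ⟨A, B, hr, rfl⟩ | ⟨A, B, hr, rfl⟩ | ⟨A, hr, rfl⟩
        · intro v hv; exact LinGen.right hr hv
        · intro v hv; exact LinGen.left hr hv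
        · exact LinGen.term hr
    have := der2_sound G hd (w.map fun a => [a]) (key hΓ)
    have hjoin : ∀ w : List T, (w.map fun a => [a]).flatten = w := by
      intro w
      induction w with
      | nil => rfl
      | cons a w ih => simp [ih]
    rw [hjoin w, hS] at this
    exact this
  · intro hw
    have key : ∀ {A : N} {w : List T}, LinGen G A w →
        ∃ Γ : List (Tp2 N), List.Forall₂ (fun a α => α ∈ LG.f a) w Γ ∧ Der2 Γ (pr A) := by
      intro A w h
      induction h with
      | @term A a ht =>
        refine ⟨[pr A], List.Forall₂.cons ?_ List.Forall₂.nil, Der2.ax _⟩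
        rw [hf a]; exact Or.inr (Or.inr ⟨A, ht, rfl⟩)
      | @right A B a w hr _ ih =>
        obtain ⟨Γ, hΓ, hd⟩ := ih
        refine ⟨div (pr A) (pr B) :: Γ, List.Forall₂.cons ?_ hΓ, ?_⟩
        · rw [hf a]; exact Or.inl ⟨A, B, hr, rfl⟩
        · have := Der2.slash (Δ := []) (Θ := []) hd (Der2.ax (pr A))
          simpa using this
      | @left A B a w hl _ ih =>
        obtain ⟨Γ, hΓ, hd⟩ := ih
        refine ⟨Γ ++ [bsl (pr B) (pr A)], ?_, ?_⟩
        · exact List.rel_append hΓ (List.Forall₂.cons (by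
            rw [hf a]; exact Or.inr (Or.inl ⟨A, B, hl, rfl⟩)) List.Forall₂.nil)
        · have := Der2.bslash (Δ := []) (Θ := []) hd (Der2.ax (pr A))
          simpa using this
    obtain ⟨Γ, hΓ, hd⟩ := key hw
    exact ⟨Γ, hΓ, hS ▸ hd⟩
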